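/- arXiv:1312.0687 — 3 statements merged into one kernel-verified Lean document; each statement's English description precedes it below -/
import Mathlib

section
/- Let K be an algebraic closure of the field F₅ with 5 elements. For every pair x, y ∈ K with y² = x³ − 1, the pair (x²⁵, y²⁵) also satisfies y² = x³ − 1, and in the group of points of the elliptic curve E : y² = x³ − 1 over K one has (x²⁵, y²⁵) = −(5 • (x, y)); that is, the square of the relative Frobenius of E equals multiplication by −5. -/
/-!
Let `K` be an algebraic closure of `F₅`.  For every pair `x, y ∈ K` with `y² = x³ − 1`,
the pair `(x²⁵, y²⁵)` also satisfies `y² = x³ − 1`, and in the group of points of the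
elliptic curve `E : y² = x³ − 1` over `K` one has `(x²⁵, y²⁵) = −(5 • (x, y))`; that is,
the square of the relative Frobenius of `E` equals multiplication by `−5`.
-/

instance : Fact (Nat.Prime 5) := ⟨by norm_num⟩

/-- An algebraic closure of the prime field `F₅ = ℤ/5ℤ`. -/
abbrev K : Type := AlgebraicClosure (ZMod 5)

/-- The elliptic curve `y² = x³ − 1` (in affine Weierstrass form) over `K`. -/
noncomputable def E : WeierstrassCurve.Affine K :=
  { a₁ := 0, a₂ := 0, a₃ := 0, a₄ := 0, a₆ := -1 }

open WeierstrassCurve.Affine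

lemma point_ext {W : WeierstrassCurve.Affine K} {x1 y1 x2 y2 : K}
    (h1 : W.Nonsingular x1 y1) (hx : x1 = x2) (hy : y1 = y2) :
    ∃ h2 : W.Nonsingular x2 y2, Point.some _ _ h1 = Point.some _ _ h2 := by
  subst hx; subst hy; exact ⟨h1, rfl⟩

lemma point_eq {W : WeierstrassCurve.Affine K} {x1 y1 x2 y2 : K}
    (h1 : W.Nonsingular x1 y1) (h2 : W.Nonsingular x2 y2) (hx : x1 = x2) (hy : y1 = y2) :
    Point.some _ _ h1 = Point.some _ _ h2 := by
  subst hx; subst hy; exact congrArg _ (Subsingleton.elim _ _)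

lemma ha1 : E.a₁ = 0 := rfl
lemma ha2 : E.a₂ = 0 := rfl
lemma ha3 : E.a₃ = 0 := rfl
lemma ha4 : E.a₄ = 0 := rfl

lemma hnegY (a b : K) : E.negY a b = -b := by
  rw [WeierstrassCurve.Affine.negY, ha1, ha3]; ring

instance : CharP K 5 := charP_of_injective_algebraMap' (ZMod 5) (A := K) 5

lemma h5 : (5 : K) = 0 := by exact_mod_cast CharP.cast_eq_zero K 5

lemma htwo : (2 : K) ≠ 0 := by
  intro h
  have : (1 : K) = 0 := by linear_combination 3 * h - h5
  exact one_ne_zero this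

lemma hyne_of_ne {a b : K} (hb : b ≠ 0) : b ≠ E.negY a b := by
  rw [hnegY]
  intro hcon
  exact hb (by linear_combination 3 * hcon + (-b) * h5)

set_option maxHeartbeats 8000000 in
set_option maxRecDepth 8000 in
open Classical in
theorem frobenius_sq_eq_neg_five_smul (x y : K) (hxy : y ^ 2 = x ^ 3 - 1) :
    (y ^ 25) ^ 2 = (x ^ 25) ^ 3 - 1 ∧
      ∀ (h : E.Nonsingular x y) (h' : E.Nonsingular (x ^ 25) (y ^ 25)),
        WeierstrassCurve.Affine.Point.some _ _ h' =
          -(5 • WeierstrassCurve.Affine.Point.some _ _ h) := by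
  have hchar : ∀ a b : K, (a - b) ^ 25 = a ^ 25 - b ^ 25 := by
    intro a b
    have := sub_pow_char_pow (p := 5) a b 2
    norm_num at this
    exact this
  constructor
  · calc (y ^ 25) ^ 2 = (y ^ 2) ^ 25 := by ring
      _ = (x ^ 3 - 1) ^ 25 := by rw [hxy]
      _ = (x ^ 3) ^ 25 - 1 ^ 25 := hchar _ _
      _ = (x ^ 25) ^ 3 - 1 := by ring
  intro h h'
  have hsmul : (5 : ℕ) • Point.some _ _ h =
      (Point.some _ _ h + Point.some _ _ h) + (Point.some _ _ h + Point.some _ _ h) + Point.some _ _ h := by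
    abel
  simp only [hsmul]
  by_cases hy0 : y = 0
  · -- 2-torsion case
    have hx3 : x ^ 3 = 1 := by
      have h0 : (0:K) ^ 2 = x ^ 3 - 1 := by rw [← hy0]; exact hxy
      linear_combination -h0
    have hPP : Point.some _ _ h + Point.some _ _ h = 0 :=
      Point.add_self_of_Y_eq (by rw [hnegY, hy0, neg_zero])
    rw [hPP, zero_add, zero_add, Point.neg_some]
    obtain ⟨h2, e⟩ := point_ext (W := E) ((nonsingular_neg ..).mpr h)
      (show x = x ^ 25 by calc x = (x^3)^8 * x := by rw [hx3]; ring
                            _ = x ^ 25 := by ring)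
      (show E.negY x y = y ^ 25 by rw [hnegY, hy0]; norm_num)
    rw [e]
  · -- y ≠ 0
    have hyne : y ≠ E.negY x y := hyne_of_ne hy0
    have h2y : (2:K)*y ≠ 0 := mul_ne_zero htwo hy0
    have hl1 : E.slope x x y y = 3 * x ^ 2 / (2 * y) := by
      rw [slope_of_Y_ne rfl hyne, hnegY, ha1, ha2, ha4,
        show (y : K) - -y = 2*y from by ring]
      congr 1
      ring
    have hx2 : E.addX x x (E.slope x x y y) = (4*x^4 + 2*x) / y^2 := by
      rw [hl1, WeierstrassCurve.Affine.addX, ha1, ha2]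
      field_simp [hy0, htwo]
      linear_combination ((-8*x^1)) * hxy + ((-3*x^4)) * h5
    have hy2 : E.addY x x y (E.slope x x y y) = (2*x^6 + 4) / y^3 := by
      rw [WeierstrassCurve.Affine.addY, hnegY, WeierstrassCurve.Affine.negAddY, hx2, hl1]
      field_simp [hy0, htwo]
      linear_combination ((1*x^3) + (-2*y^2) + (2)) * hxy + ((-3*x^6) + (-1*x^3) + (-2)) * h5
    obtain ⟨h2, hh2⟩ := point_ext (nonsingular_add h h fun hc => hyne hc.2) hx2 hy2
    have key2 : Point.some _ _ h + Point.some _ _ h = Point.some _ _ h2 := by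
      rw [Point.add_self_of_Y_ne hyne]; exact hh2
    rw [key2]
    by_cases hd0 : x ^ 6 + 2 = 0
    · -- 4-torsion case : 2P is 2-torsion
      have hy2z : (2*x^6 + 4) / y^3 = 0 := by
        rw [show (2*x^6+4 : K) = 2*(x^6+2) by ring, hd0, mul_zero, zero_div]
      have h4 : Point.some _ _ h2 + Point.some _ _ h2 = 0 :=
        Point.add_self_of_Y_eq (by rw [hnegY, hy2z, neg_zero])
      rw [h4, zero_add, Point.neg_some]
      obtain ⟨h3, e⟩ := point_ext (W := E) ((nonsingular_neg ..).mpr h)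
        (show x = x ^ 25 by linear_combination (-(x^19) + 2*x^13 + x^7 - 2*x) * hd0 + (-(x^13) + x) * h5)
        (show E.negY x y = y ^ 25 by
          rw [hnegY]
          linear_combination (-(x^33*y) - x^30*y^3 + x^30*y - x^27*y^5 - x^24*y^7 - x^24*y^5 - x^21*y^9 - 2*x^21*y^7 - x^21*y^5 - x^18*y^11 + 2*x^18*y^9 + 2*x^18*y^7 - x^18*y^5 + 2*x^18*y - x^15*y^13 + x^15*y^11 - x^15*y^9 + x^15*y^7 - x^15*y^5 + 2*x^15*y^3 - 2*x^15*y - x^12*y^15 + x^12*y^5 - x^9*y^17 - x^9*y^15 + x^9*y^7 + x^9*y^5 - x^6*y^19 - 2*x^6*y^17 - x^6*y^15 + x^6*y^9 + 2*x^6*y^7 + x^6*y^5 - x^3*y^21 + 2*x^3*y^19 + 2*x^3*y^17 - x^3*y^15 + x^3*y^11 - 2*x^3*y^9 - 2*x^3*y^7 + x^3*y^5 - x^3*y - y^23 + y^21 - y^19 + y^17 - y^15 + y^13 - y^11 + y^9 - y^7 + y^5 - y^3 + y) * hxy + (-(x^30*y) + 2*x^27*y + x^24*y + x^21*y - 2*x^18*y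 + 2*x^9*y + x^3*y - y) * hd0 + (-(x^27*y) + x^21*y^9 + x^21*y^7 - x^18*y^9 - x^9*y + x^6*y^19 + x^6*y^17 - x^6*y^9 - x^6*y^7 - x^3*y^19 + x^3*y^9) * h5)
      rw [e]
    · -- x^6 + 2 ≠ 0, 2P has nonzero y-coordinate
      have hy2nz : (2*x^6 + 4) / y^3 ≠ 0 := by
        apply div_ne_zero _ (pow_ne_zero 3 hy0)
        intro hcon
        exact hd0 (by linear_combination 3 * hcon - (x^6+2) * h5)
      have hq : (2*x^6 + 4 : K) ≠ 0 := by
        intro hcon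
        exact hd0 (by linear_combination 3 * hcon - (x^6+2) * h5)
      have hyne2 : (2*x^6 + 4) / y^3 ≠ E.negY ((4*x^4 + 2*x) / y^2) ((2*x^6 + 4) / y^3) :=
        hyne_of_ne hy2nz
      have hl2 : E.slope ((4*x^4 + 2*x) / y^2) ((4*x^4 + 2*x) / y^2) ((2*x^6 + 4) / y^3) ((2*x^6 + 4) / y^3)
          = 3 * ((4*x^4 + 2*x) / y^2) ^ 2 / (2 * ((2*x^6 + 4) / y^3)) := by
      -- slope of doubling 2P
        rw [slope_of_Y_ne rfl hyne2, hnegY, ha1, ha2, ha4,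
          show (2*x^6 + 4)/y^3 - -((2*x^6 + 4)/y^3) = 2*((2*x^6 + 4)/y^3) from by ring]
        congr 1
        ring
      have hx4 : E.addX ((4*x^4 + 2*x) / y^2) ((4*x^4 + 2*x) / y^2)
          (E.slope ((4*x^4 + 2*x) / y^2) ((4*x^4 + 2*x) / y^2) ((2*x^6 + 4) / y^3) ((2*x^6 + 4) / y^3))
          = (x^16 + 4*x^13 + 4*x^10 + x^7 + 2*x^4 + 4*x) / (y^2 * (x^6+2)^2) := by
        rw [hl2, WeierstrassCurve.Affine.addX, ha1, ha2]
        have hq' : x^6*2+4 ≠ 0 := by rw [show x^6*2+4 = 2*x^6+4 by ring]; exact hq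
        field_simp [hy0, htwo, hd0, hq, hq']
        linear_combination (0) * hxy + ((432*x^28) + (896*x^25) + (2304*x^22) + (3760*x^19) + (3952*x^16) + (4224*x^13) + (1984*x^10) + (448*x^7) + (-320*x^4) + (-256*x^1)) * h5
      have hy4 : E.addY ((4*x^4 + 2*x) / y^2) ((4*x^4 + 2*x) / y^2) ((2*x^6 + 4) / y^3)
          (E.slope ((4*x^4 + 2*x) / y^2) ((4*x^4 + 2*x) / y^2) ((2*x^6 + 4) / y^3) ((2*x^6 + 4) / y^3))
          = (4*x^24 + 2*x^21 + 3*x^18 + 2*x^15 + 2*x^9 + x^6 + 2*x^3 + 3) / (y^3 * (x^6+2)^3) := by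
        rw [WeierstrassCurve.Affine.addY, hnegY, WeierstrassCurve.Affine.negAddY, hx4, hl2]
        have hq' : x^6*2+4 ≠ 0 := by rw [show x^6*2+4 = 2*x^6+4 by ring]; exact hq
        field_simp [hy0, htwo, hd0, hq, hq']
        linear_combination (0) * hxy + ((24*x^30) + (8*x^27) + (136*x^24) + (192*x^21) + (368*x^18) + (540*x^15) + (404*x^12) + (384*x^9) + (12*x^6) + (16*x^3) + (-56)) * h5
      obtain ⟨h4, hh4⟩ := point_ext (nonsingular_add h2 h2 fun hc => hyne2 hc.2) hx4 hy4
      have key4 : Point.some _ _ h2 + Point.some _ _ h2 = Point.some _ _ h4 := by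
        rw [Point.add_self_of_Y_ne hyne2]; exact hh4
      rw [key4]
      have hden : y^2 * (x^6+2)^2 ≠ 0 :=
        mul_ne_zero (pow_ne_zero 2 hy0) (pow_ne_zero 2 hd0)
      by_cases hx4x : (x^16 + 4*x^13 + 4*x^10 + x^7 + 2*x^4 + 4*x) / (y^2 * (x^6+2)^2) = x
      · -- 3-torsion case : 4P = P
        have hx4xc := hx4x
        rw [div_eq_iff hden] at hx4x
        have hpsi : x^4 + x = 0 := by
          linear_combination 2 * hx4x + (2*x^13 - 2*x^7 - 2*x) * hxy + (-2*x^13 - 2*x^10 + 2*x^7*y^2 - x^4 + 2*x*y^2 - x) * h5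
        have hden3 : y^3 * (x^6+2)^3 ≠ 0 :=
          mul_ne_zero (pow_ne_zero 3 hy0) (pow_ne_zero 3 hd0)
        have hy4y : (4*x^24 + 2*x^21 + 3*x^18 + 2*x^15 + 2*x^9 + x^6 + 2*x^3 + 3) / (y^3 * (x^6+2)^3) = y := by
          rw [div_eq_iff hden3]
          linear_combination (-(x^21) - x^18*y^2 + x^18 - x^15 - x^12*y^2 + x^12 - 2*x^9 - 2*x^6*y^2 + 2*x^6 + 2*x^3 + 2*y^2 - 2) * hxy + (-2*x^20 + x^17 - x^11 - 2*x^8 - 2*x^5 - 2*x^2) * hpsi + (x^24 + x^21 + x^15 - x^12*y^4 + 2*x^9 - 2*x^6*y^4 + x^6 - 2*y^4 + 1) * h5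
        have e4 : Point.some _ _ h4 = Point.some _ _ h := point_eq h4 h hx4xc hy4y
        rw [e4, key2, Point.neg_some]
        exact point_eq h' ((nonsingular_neg ..).mpr h2)
          (by rw [eq_div_iff (pow_ne_zero 2 hy0)]
              linear_combination (x^25) * hxy + (x^24 - 2*x^21 + 2*x^18 - 2*x^15 + 2*x^12 - 2*x^9 + 2*x^6 - 2*x^3 - 2) * hpsi)
          (by rw [hnegY, ← neg_div, eq_div_iff (pow_ne_zero 3 hy0)]
              linear_combination (x^39 + x^36*y^2 + 2*x^36 + x^33*y^4 - 2*x^33*y^2 - 2*x^33 + x^30*y^6 - x^30*y^4 + x^30*y^2 - x^30 + x^27*y^8 + x^24*y^10 + x^24*y^8 - 2*x^24 + x^21*y^12 + 2*x^21*y^10 + x^21*y^8 - 2*x^21*y^2 + x^21 + x^18*y^14 - 2*x^18*y^12 - 2*x^18*y^10 + x^18*y^8 - 2*x^18*y^4 - x^18*y^2 - x^18 + x^15*y^16 - x^15*y^14 + x^15*y^12 - x^15*y^10 + x^15*y^8 - 2*x^15*y^6 + 2*x^15*y^4 - 2*x^15*y^2 + 2*x^15 + x^12*y^18 - x^12*y^8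 + x^9*y^20 + x^9*y^18 - x^9*y^10 - x^9*y^8 + x^9 + x^6*y^22 + 2*x^6*y^20 + x^6*y^18 - x^6*y^12 - 2*x^6*y^10 - x^6*y^8 + x^6*y^2 + 2*x^6 + x^3*y^24 - 2*x^3*y^22 - 2*x^3*y^20 + x^3*y^18 - x^3*y^14 + 2*x^3*y^12 + 2*x^3*y^10 - x^3*y^8 + x^3*y^4 - 2*x^3*y^2 - 2*x^3 + y^26 - y^24 + y^22 - y^20 + y^18 - y^16 + y^14 - y^12 + y^10 - y^8 + y^6 - y^4 + y^2 - 1) * hxy + (x^38 + x^32 + x^26 + 2*x^23 + x^20 + 2*x^17 + x^14 + 2*x^11 - x^8 + 2*x^5 + x^2) * hpsi + (-(x^36*y^2) - x^36 + x^33*y^2 - x^27 - x^21*y^12 - x^21*y^10 - x^21 + x^18*y^12 + x^18*y^4 - x^15 - x^6*y^22 - x^6*y^20 + x^6*y^12 + x^6*y^10 - x^6*y^2 - x^6 + x^3*y^22 - x^3*y^12 + x^3*y^2 + 1) * h5)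
      · -- generic case
        have h5P : Point.some _ _ h4 + Point.some _ _ h =
            Point.some _ _ (nonsingular_add h4 h fun hc => hx4x hc.1) :=
          Point.add_of_X_ne hx4x
        rw [h5P, Point.neg_some]
        have hU : x^16 + 4*x^13 + 4*x^10 + x^7 + 2*x^4 + 4*x - y^2*(x^6+2)^2*x ≠ 0 := by
          intro hc; apply hx4x; rw [div_eq_iff hden]; linear_combination hc
        have hx5 : E.addX ((x^16 + 4*x^13 + 4*x^10 + x^7 + 2*x^4 + 4*x) / (y^2 * (x^6+2)^2)) x
            (E.slope ((x^16 + 4*x^13 + 4*x^10 + x^7 + 2*x^4 + 4*x) / (y^2 * (x^6+2)^2)) x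
              ((4*x^24 + 2*x^21 + 3*x^18 + 2*x^15 + 2*x^9 + x^6 + 2*x^3 + 3) / (y^3 * (x^6+2)^3)) y)
            = x ^ 25 := by
          rw [slope_of_X_ne hx4x, WeierstrassCurve.Affine.addX, ha1, ha2]
          have hx0 : x ≠ 0 := by rintro rfl; apply hU; ring
          have hU' : x^3*(x^3*(x^3*(x^3*(x^3+4)+4)+1)+2)+4 - y^2*(x^6+2)^2 ≠ 0 := by
            intro hc; apply hU; linear_combination x*hc
          field_simp [hy0, htwo, hd0, hq, hU, hx0, hU']
          linear_combination ((1*x^66*y^2) + (-1*x^63*y^4) + (9*x^63*y^2) + (-25*x^63) + (12*x^60*y^2) + (-12*x^57*y^4) + (78*x^57*y^2) + (-150*x^57) + (56*x^54*y^2) + (20*x^54) + (-60*x^51*y^4) + (276*x^51*y^2) + (-405*x^51) + (128*x^48*y^2) + (100*x^48) + (-160*x^45*y^4) + (528*x^45*y^2) + (-710*x^45) + (137*x^42*y^2) + (206*x^42) + (-240*x^39*y^4) + (623*x^39*y^2) + (-832*x^39) + (1*x^36*y^6) + (-1*x^36*y^4) + (23*x^36*y^2) + (308*x^36) + (-192*x^33*y^4)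 + (473*x^33*y^2) + (-519*x^33) + (12*x^30*y^6) + (-12*x^30*y^4) + (-62*x^30*y^2) + (362*x^30) + (-64*x^27*y^4) + (164*x^27*y^2) + (95*x^27) + (60*x^24*y^6) + (-60*x^24*y^4) + (66*x^24*y^2) + (150*x^24) + (-84*x^21*y^2) + (690*x^21) + (160*x^18*y^6) + (-160*x^18*y^4) + (286*x^18*y^2) + (-150*x^18) + (-152*x^15*y^2) + (720*x^15) + (240*x^12*y^6) + (-240*x^12*y^4) + (308*x^12*y^2) + (-228*x^12) + (-128*x^9*y^2) + (376*x^9) + (192*x^6*y^6) + (-192*x^6*y^4) + (136*x^6*y^2) + (-104*x^6) + (-32*x^3*y^2) + (112*x^3) + (64*y^6) + (-64*y^4) + (16*y^2) + (-16)) * hxy + ((-5*x^66) + (5*x^63) + (-30*x^60) + (34*x^57) + (-85*x^54) + (101*x^51) + (-159*x^48) + (184*x^45) + (-214*x^42) + (201*x^39) + (-216*x^36) + (117*x^33) + (-130*x^30) + (-93*x^27) + (2*x^24) + (-249*x^21) + (102*x^18) + (-268*x^15) + (73*x^12) + (-112*x^9) + (26*x^6) + (-36*x^3) + (5)) * h5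
        obtain ⟨hfin, e⟩ := point_ext (W := E) ((nonsingular_neg ..).mpr (nonsingular_add h4 h fun hc => hx4x hc.1))
          hx5
          (show E.negY _ (E.addY _ x _ (E.slope _ x _ y)) = y ^ 25 by
            rw [WeierstrassCurve.Affine.addY, hnegY, hnegY, neg_neg, WeierstrassCurve.Affine.negAddY,
              hx5, slope_of_X_ne hx4x]
            have hx0 : x ≠ 0 := by rintro rfl; apply hU; ring
            have hU' : x^3*(x^3*(x^3*(x^3*(x^3+4)+4)+1)+2)+4 - y^2*(x^6+2)^2 ≠ 0 := by
              intro hc; apply hU; linear_combination x*hc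
            field_simp [hy0, htwo, hd0, hq, hU, hx0, hU']
            linear_combination ((-5*x^69) + (-5*x^66*y^2) + (65*x^66) + (-5*x^63*y^4) + (60*x^63*y^2) + (-425*x^63) + (-5*x^60*y^6) + (55*x^60*y^4) + (-365*x^60*y^2) + (1890*x^60) + (-5*x^57*y^8) + (50*x^57*y^6) + (-310*x^57*y^4) + (1521*x^57*y^2) + (-6425*x^57) + (-5*x^54*y^10) + (45*x^54*y^8) + (-260*x^54*y^6) + (1211*x^54*y^4) + (-4906*x^54*y^2) + (17895*x^54) + (-5*x^51*y^12) + (40*x^51*y^10) + (-215*x^51*y^8) + (952*x^51*y^6) + (-3695*x^51*y^4) + (12970*x^51*y^2) + (-42095*x^51) + (-5*x^48*y^14) + (35*x^48*y^12) + (-175*x^48*y^10) + (737*x^48*y^8) + (-2743*x^48*y^6) + (9275*x^48*y^4) + (-29135*x^48*y^2) + (85945*x^48) + (-5*x^45*y^16) + (30*x^45*y^14) + (-140*x^45*y^12) + (562*x^45*y^10) + (-2006*x^45*y^8) + (6542*x^45*y^6) + (-19860*x^45*y^4) + (56782*x^45*y^2) + (-154465*x^45) + (-5*x^42*y^18) +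 (25*x^42*y^16) + (-110*x^42*y^14) + (422*x^42*y^12) + (-1444*x^42*y^10) + (4536*x^42*y^8) + (-13318*x^42*y^6) + (36922*x^42*y^4) + (-97701*x^42*y^2) + (247650*x^42) + (-5*x^39*y^20) + (20*x^39*y^18) + (-85*x^39*y^16) + (312*x^39*y^14) + (-1022*x^39*y^12) + (3092*x^39*y^10) + (-8782*x^39*y^8) + (23644*x^39*y^6) + (-60779*x^39*y^4) + (149936*x^39*y^2) + (-356905*x^39) + (-5*x^36*y^22) + (15*x^36*y^20) + (-65*x^36*y^18) + (227*x^36*y^16) + (-710*x^36*y^14) + (2070*x^36*y^12) + (-5690*x^36*y^10) + (14862*x^36*y^8) + (-37135*x^36*y^6) + (89157*x^36*y^4) + (-206987*x^36*y^2) + (465205*x^36) + (-5*x^33*y^24) + (10*x^33*y^22) + (-50*x^33*y^20) + (162*x^33*y^18) + (-483*x^33*y^16) + (1360*x^33*y^14) + (-3620*x^33*y^12) + (9172*x^33*y^10) + (-22273*x^33*y^8) + (52102*x^33*y^6) + (-117830*x^33*y^4) + (258215*x^33*y^2) + (-549710*x^33) + (1*x^30*y^28) + (-5*x^30*y^26)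 + (5*x^30*y^24) + (-40*x^30*y^22) + (112*x^30*y^20) + (-321*x^30*y^18) + (877*x^30*y^16) + (-2260*x^30*y^14) + (5552*x^30*y^12) + (-13101*x^30*y^10) + (29829*x^30*y^8) + (-65728*x^30*y^6) + (140384*x^30*y^4) + (-291509*x^30*y^2) + (588640*x^30) + (-35*x^27*y^24) + (72*x^27*y^22) + (-209*x^27*y^20) + (556*x^27*y^18) + (-1383*x^27*y^16) + (3292*x^27*y^14) + (-7549*x^27*y^12) + (16728*x^27*y^10) + (-35899*x^27*y^8) + (74736*x^27*y^6) + (-151129*x^27*y^4) + (297134*x^27*y^2) + (-568530*x^27) + (10*x^24*y^28) + (-35*x^24*y^26) + (37*x^24*y^24) + (-137*x^24*y^22) + (347*x^24*y^20) + (-827*x^24*y^18) + (1909*x^24*y^16) + (-4257*x^24*y^14) + (9179*x^24*y^12) + (-19171*x^24*y^10) + (38837*x^24*y^8) + (-76393*x^24*y^6) + (145995*x^24*y^4) + (-271394*x^24*y^2) + (491010*x^24) + (2*x^21*y^26) + (-100*x^21*y^24) + (210*x^21*y^22) + (-480*x^21*y^20) + (1082*x^21*y^18) + (-2348*x^21*y^16)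 + (4922*x^21*y^14) + (-9992*x^21*y^12) + (19666*x^21*y^10) + (-37556*x^21*y^8) + (69634*x^21*y^6) + (-125424*x^21*y^4) + (219632*x^21*y^2) + (-374010*x^21) + (40*x^18*y^28) + (-98*x^18*y^26) + (110*x^18*y^24) + (-270*x^18*y^22) + (602*x^18*y^20) + (-1266*x^18*y^18) + (2574*x^18*y^16) + (-5070*x^18*y^14) + (9674*x^18*y^12) + (-17890*x^18*y^10) + (32078*x^18*y^8) + (-55790*x^18*y^6) + (94170*x^18*y^4) + (-154360*x^18*y^2) + (246315*x^18) + (12*x^15*y^26) + (-160*x^15*y^24) + (332*x^15*y^22) + (-664*x^15*y^20) + (1308*x^15*y^18) + (-2496*x^15*y^16) + (4604*x^15*y^14) + (-8216*x^15*y^12) + (14188*x^15*y^10) + (-23712*x^15*y^8) + (38380*x^15*y^6) + (-60248*x^15*y^4) + (91968*x^15*y^2) + (-136530*x^15) + (80*x^12*y^28) + (-148*x^12*y^26) + (172*x^12*y^24) + (-332*x^12*y^22) + (644*x^12*y^20) + (-1188*x^12*y^18) + (2108*x^12*y^16) + (-3612*x^12*y^14) + (5972*x^12*y^12) + (-9524*x^12*y^10)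 + (14668*x^12*y^8) + (-21868*x^12*y^6) + (31652*x^12*y^4) + (-44544*x^12*y^2) + (61385*x^12) + (24*x^9*y^26) + (-160*x^9*y^24) + (312*x^9*y^22) + (-544*x^9*y^20) + (920*x^9*y^18) + (-1504*x^9*y^16) + (2360*x^9*y^14) + (-3552*x^9*y^12) + (5144*x^9*y^10) + (-7200*x^9*y^8) + (9784*x^9*y^6) + (-12960*x^9*y^4) + (16848*x^9*y^2) + (-21360*x^9) + (80*x^6*y^28) + (-136*x^6*y^26) + (152*x^6*y^24) + (-232*x^6*y^22) + (376*x^6*y^20) + (-584*x^6*y^18) + (856*x^6*y^16) + (-1192*x^6*y^14) + (1592*x^6*y^12) + (-2056*x^6*y^10) + (2584*x^6*y^8) + (-3176*x^6*y^6) + (3832*x^6*y^4) + (-4496*x^6*y^2) + (5280*x^6) + (16*x^3*y^26) + (-80*x^3*y^24) + (144*x^3*y^22) + (-208*x^3*y^20) + (272*x^3*y^18) + (-336*x^3*y^16) + (400*x^3*y^14) + (-464*x^3*y^12) + (528*x^3*y^10) + (-592*x^3*y^8) + (656*x^3*y^6) + (-720*x^3*y^4) + (800*x^3*y^2) + (-840*x^3)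 + (32*y^28) + (-64*y^26) + (64*y^24) + (-64*y^22) + (64*y^20) + (-64*y^18) + (64*y^16) + (-64*y^14) + (64*y^12) + (-64*y^10) + (64*y^8) + (-64*y^6) + (64*y^4) + (-32*y^2) + (20)) * hxy + ((-1*x^72) + (14*x^69) + (-98*x^66) + (463*x^63) + (-1663*x^60) + (4864*x^57) + (-11998*x^54) + (25608*x^51) + (-48082*x^48) + (80423*x^45) + (-120911*x^42) + (164422*x^39) + (-202983*x^36) + (227670*x^33) + (-231434*x^30) + (211908*x^27) + (-173004*x^24) + (124065*x^21) + (-76569*x^18) + (39583*x^15) + (-16549*x^12) + (5328*x^9) + (-1224*x^6) + (172*x^3) + (-4)) * h5)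
        rw [e]
end

section
/- Let K be an algebraic closure of the field F₅ with 5 elements and let P = (a, b) be an affine point of the elliptic curve E : y² = x³ − 1 over K (so b² = a³ − 1). Then 4 • P = O and 2 • P ≠ O if and only if a²⁵ = a and b²⁵ ≠ b (i.e. P is a 4-torsion point that is not 2-torsion exactly when a lies in F₂₅ but b does not). -/
open Classical

namespace FourTorsionAux

open WeierstrassCurve.Affine

lemma two_ne_zero' : (2 : K) ≠ 0 := by
  intro hh
  have h2 : algebraMap (ZMod 5) K 2 = 0 := by rw [map_ofNat]; exact hh
  rw [map_eq_zero_iff _ (algebraMap (ZMod 5) K).injective] at h2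
  exact absurd h2 (by decide)

lemma five_eq_zero' : (5 : K) = 0 := by
  have : ((5 : ℕ) : K) = 0 := CharP.cast_eq_zero K 5
  exact_mod_cast this

lemma negY_eq (x y : K) : E.negY x y = -y := by
  simp [E, WeierstrassCurve.Affine.negY]

lemma eq_negY_iff (x y : K) : y = E.negY x y ↔ y = 0 := by
  rw [negY_eq]
  constructor
  · intro hy
    have h0 : 2 * y = 0 := by linear_combination hy
    exact (mul_eq_zero.mp h0).resolve_left two_ne_zero'
  · rintro rfl; simp

lemma two_smul_some_eq_zero_iff {x y : K} (h : E.Nonsingular x y) :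
    2 • Point.some _ _ h = 0 ↔ y = 0 := by
  rw [two_smul, ← eq_negY_iff x y]
  constructor
  · intro hz
    by_contra hy
    exact Point.some_ne_zero _ ((Point.add_self_of_Y_ne (h₁ := h) hy) ▸ hz)
  · exact fun hy => Point.add_of_Y_eq rfl hy

lemma addY_self_eq (a b L : K) : E.addY a a b L = -(L * (L ^ 2 - 2 * a - a) + b) := by
  rw [WeierstrassCurve.Affine.addY, negY_eq, WeierstrassCurve.Affine.negAddY,
    WeierstrassCurve.Affine.addX]
  simp only [E]
  ring

lemma slope_self_eq {a b : K} (hy : b ≠ E.negY a b) :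
    E.slope a a b b = 3 * a ^ 2 / (2 * b) := by
  rw [WeierstrassCurve.Affine.slope_of_Y_ne rfl hy, negY_eq]
  simp only [E]
  ring_nf

/-- Forward arithmetic: from `a⁶ = 3` deduce the Frobenius conditions. -/
lemma arith_forward {a b : K} (hab : b ^ 2 = a ^ 3 - 1) (hb : b ≠ 0) (ha : a ^ 6 = 3) :
    a ^ 25 = a ∧ b ^ 25 ≠ b := by
  have h2 : (2 : K) ≠ 0 := two_ne_zero'
  have h5 : (5 : K) = 0 := five_eq_zero'
  have h24 : b ^ 24 = -1 := by
    calc b ^ 24 = (b ^ 2) ^ 12 := by ring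
    _ = (a ^ 3 - 1) ^ 12 := by rw [hab]
    _ = -1 := by
        linear_combination ((a^3)^10 - 12*(a^3)^9 + 69*(a^3)^8 - 256*(a^3)^7 + 702*(a^3)^6
          - 1560*(a^3)^5 + 3030*(a^3)^4 - 5472*(a^3)^3 + 9585*(a^3)^2 - 16636*(a^3)
          + 28821) * ha + (17293 - 9984*a^3) * h5
  refine ⟨by linear_combination (a^19+3*a^13+9*a^7+27*a)*ha + 16*a*h5, ?_⟩
  intro hB
  have hzero : 2 * b = 0 := by
    have hb25 : b ^ 25 = -b := by
      calc b ^ 25 = b ^ 24 * b := by ring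
      _ = -b := by rw [h24]; ring
    linear_combination hb25 - hB
  exact hb ((mul_eq_zero.mp hzero).resolve_left h2)

/-- Backward arithmetic: from the Frobenius conditions deduce `a⁶ = 3`. -/
lemma arith_backward {a b : K} (hab : b ^ 2 = a ^ 3 - 1) (hb : b ≠ 0)
    (hA : a ^ 25 = a) (hB : b ^ 25 ≠ b) : a ^ 6 = 3 := by
  have h2 : (2 : K) ≠ 0 := two_ne_zero'
  have h5 : (5 : K) = 0 := five_eq_zero'
  have h50 : b ^ 50 = b ^ 2 := by
    calc b ^ 50 = (b ^ 2) ^ 25 := by ring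
    _ = (a ^ 3 - 1) ^ 25 := by rw [hab]
    _ = (a ^ 3) ^ 25 - 1 ^ 25 := by
        have := sub_pow_char_pow (R := K) (p := 5) (n := 2) (a ^ 3) 1
        norm_num at this ⊢
        exact this
    _ = b ^ 2 := by rw [← pow_mul, mul_comm, pow_mul, hA]; rw [hab]; ring
  have h48 : b ^ 48 = 1 := by
    have e : b ^ 2 * b ^ 48 = b ^ 2 * 1 := by linear_combination h50
    exact mul_left_cancel₀ (pow_ne_zero 2 hb) e
  have h24 : b ^ 24 = -1 := by
    have hfac : (b ^ 24 - 1) * (b ^ 24 + 1) = 0 := by linear_combination h48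
    rcases mul_eq_zero.mp hfac with h1 | h1
    · exact absurd (by calc b ^ 25 = b ^ 24 * b := by ring
                         _ = b := by rw [sub_eq_zero.mp h1]; ring) hB
    · linear_combination h1
  have ha0 : a ≠ 0 := by
    intro h0
    have hone : (1 : K) = -1 := by
      calc (1 : K) = ((-1 : K)) ^ 12 := by norm_num
      _ = (b ^ 2) ^ 12 := by rw [h0] at hab; rw [hab]; norm_num
      _ = b ^ 24 := by ring
      _ = -1 := h24
    exact h2 (by linear_combination hone)
  have e1 : a ^ 24 = 1 := by
    have e : a * a ^ 24 = a * 1 := by linear_combination hA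
    exact mul_left_cancel₀ ha0 e
  have e2 : (a ^ 3 - 1) ^ 12 = -1 := by
    calc (a ^ 3 - 1) ^ 12 = (b ^ 2) ^ 12 := by rw [hab]
    _ = b ^ 24 := by ring
    _ = -1 := h24
  linear_combination ((a^3)^9 + 4*(a^3)^8 + 3*(a^3)^7 + 4*(a^3)^6 + (a^3)^3 + (a^3)^2
      + 3*(a^3) + 4) * e1
    + (4*(a^3)^5 + 4*(a^3)^4 + (a^3)^3 + 4*(a^3)^2 + 2*(a^3) + 3) * e2
    - ((a^3)^17 - 8*(a^3)^16 + 44*(a^3)^15 - 124*(a^3)^14 + 224*(a^3)^13 - 233*(a^3)^12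
      + 48*(a^3)^11 + 295*(a^3)^10 - 620*(a^3)^9 + 781*(a^3)^8 - 764*(a^3)^7 + 632*(a^3)^6
      - 448*(a^3)^5 + 261*(a^3)^4 - 115*(a^3)^3 + 36*(a^3)^2 - 7*(a^3) + 1) * h5

end FourTorsionAux

theorem four_torsion_not_two_torsion_iff (a b : K) (hab : b ^ 2 = a ^ 3 - 1)
    (h : E.Nonsingular a b) :
    (4 • WeierstrassCurve.Affine.Point.some a b h = 0 ∧
        2 • WeierstrassCurve.Affine.Point.some a b h ≠ 0) ↔
      (a ^ 25 = a ∧ b ^ 25 ≠ b) := by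
  open WeierstrassCurve.Affine in
  by_cases hb : b = 0
  · simp only [ne_eq, FourTorsionAux.two_smul_some_eq_zero_iff, hb, not_true_eq_false,
      and_false, false_iff, not_and, not_not]
    intro _; simp [hb]
  · have h2 : (2 : K) ≠ 0 := FourTorsionAux.two_ne_zero'
    have h5 : (5 : K) = 0 := FourTorsionAux.five_eq_zero'
    have hy : b ≠ E.negY a b := fun hy => hb ((FourTorsionAux.eq_negY_iff a b).mp hy)
    have hdouble : 2 • Point.some _ _ h = Point.some _ _ (nonsingular_add h h fun hxy => hy hxy.right) := by
      rw [two_smul]; exact Point.add_self_of_Y_ne hy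
    have h4 : (4 : ℕ) • Point.some _ _ h = 2 • (2 • Point.some _ _ h) := by
      rw [smul_smul]; norm_num
    rw [h4, hdouble]
    simp only [ne_eq, FourTorsionAux.two_smul_some_eq_zero_iff, Point.some_ne_zero,
      not_false_eq_true, and_true]
    rw [FourTorsionAux.addY_self_eq, FourTorsionAux.slope_self_eq hy]
    constructor
    · intro H
      have ha : a ^ 6 = 3 := by
        field_simp at H
        linear_combination H + (8*(b^2+a^3-1)-36*a^3)*hab + (4*a^3+1)*h5
      exact FourTorsionAux.arith_forward hab hb ha
    · rintro ⟨hA, hB⟩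
      have ha : a ^ 6 = 3 := FourTorsionAux.arith_backward hab hb hA hB
      field_simp
      linear_combination (1:K)*ha - (8*(b^2+a^3-1)-36*a^3)*hab - (4*a^3+1)*h5
end

section
/- Let K be an algebraic closure of the field F₅ with 5 elements and let P = (a, b) be an affine point of the elliptic curve E : y² = x³ − 1 over K (so b² = a³ − 1). Then 6 • P = O and 2 • P ≠ O if and only if a²⁵ = a, b²⁵ = b and b ≠ 0 (i.e. P is a 6-torsion point that is not 2-torsion exactly when a ∈ F₂₅ and b ∈ F₂₅ \ {0}). -/
open WeierstrassCurve.Affine WeierstrassCurve.Affine.Point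

lemma h5K : (5:K) = 0 := CharP.cast_eq_zero K 5

lemma two_ne_K : (2:K) ≠ 0 := fun h => one_ne_zero (α := K) (by linear_combination 3*h - h5K)

lemma EnegY (x y : K) : E.negY x y = -y := by
  simp [WeierstrassCurve.Affine.negY, E]

lemma EaddX (x l : K) : E.addX x x l = l^2 - 2*x := by
  simp only [WeierstrassCurve.Affine.addX, E]; ring

lemma Eeq {x y : K} (hxy : E.Nonsingular x y) : y^2 = x^3 - 1 := by
  have := (E.equation_iff x y).mp hxy.1
  rw [show E.a₁ = 0 from rfl, show E.a₃ = 0 from rfl, show E.a₂ = 0 from rfl,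
    show E.a₄ = 0 from rfl, show E.a₆ = -1 from rfl] at this
  linear_combination this

open Classical in
lemma three_smul_iff (u v : K) (hQ : E.Nonsingular u v) :
    3 • WeierstrassCurve.Affine.Point.some _ _ hQ = 0 ↔ u ^ 4 + u = 0 := by
  have hEq : v ^ 2 = u ^ 3 - 1 := Eeq hQ
  by_cases hv : v = 0
  · subst hv
    have hu3 : u ^ 3 = 1 := by linear_combination -hEq
    have h2R : Point.some _ _ hQ + Point.some _ _ hQ = 0 :=
      add_self_of_Y_eq (by rw [EnegY]; simp)
    have h3R : 3 • Point.some _ _ hQ = Point.some _ _ hQ := by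
      rw [show (3:ℕ) = 2+1 from rfl, succ_nsmul, two_nsmul, h2R, zero_add]
    rw [h3R]
    constructor
    · exact fun h0 => absurd h0 (some_ne_zero hQ)
    · intro hcon
      exfalso
      have hu0 : u = 0 := by linear_combination 3*hcon - 3*u*hu3 - u*h5K
      rw [hu0] at hu3
      norm_num at hu3
  · have h2v : (2*v) ≠ 0 := mul_ne_zero two_ne_K hv
    have hy : v ≠ E.negY u v := by
      rw [EnegY]; intro hc; exact hv (by linear_combination 3*hc - v*h5K)
    have hvv : v - -v ≠ 0 := by
      intro hc; exact hv (by linear_combination 3*hc - v*h5K)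
    have hl : E.slope u u v v * (2*v) = 3*u^2 := by
      rw [slope_of_Y_ne rfl hy, EnegY, show E.a₂ = 0 from rfl, show E.a₄ = 0 from rfl,
        show E.a₁ = 0 from rfl, div_mul_eq_mul_div, div_eq_iff hvv]
      ring
    have hUu : (E.addX u u (E.slope u u v v) - u) * (2*v)^2 = 2*(u^4+u) := by
      rw [EaddX]
      linear_combination (2*v*(E.slope u u v v) + 3*u^2) * hl + (-12*u) * hEq + (-u^4 + 2*u) * h5K
    have hns := nonsingular_add hQ hQ (fun hxy => hy hxy.right)
    have h2R : Point.some _ _ hQ + Point.some _ _ hQ = Point.some _ _ hns := add_self_of_Y_ne hy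
    have h3R : 3 • Point.some _ _ hQ = Point.some _ _ hns + Point.some _ _ hQ := by
      rw [show (3:ℕ) = 2+1 from rfl, succ_nsmul, two_nsmul, h2R]
    rw [h3R]
    constructor
    · intro h0
      have heq := add_eq_zero_iff_eq_neg.mp h0
      rw [neg_some, Point.some.injEq] at heq
      obtain ⟨hx, -⟩ := heq
      rw [hx] at hUu
      linear_combination (-3)*hUu - (u^4+u)*h5K
    · intro hu
      have hUx : E.addX u u (E.slope u u v v) = u := by
        have hz : (E.addX u u (E.slope u u v v) - u) * (2*v)^2 = 0 := by
          rw [hUu]; linear_combination 2*hu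
        rcases mul_eq_zero.mp hz with h' | h'
        · exact sub_eq_zero.mp h'
        · exact absurd h' (pow_ne_zero 2 h2v)
      have hV2 : (E.addY u u v (E.slope u u v v))^2 = v^2 := by
        rw [Eeq hns, hUx, ← hEq]
      have hfac : (E.addY u u v (E.slope u u v v) - v) * (E.addY u u v (E.slope u u v v) + v) = 0 := by
        linear_combination hV2
      rcases mul_eq_zero.mp hfac with h' | h'
      · exfalso
        have hsome : Point.some _ _ hns = Point.some _ _ hQ := by
          rw [Point.some.injEq]; exact ⟨hUx, sub_eq_zero.mp h'⟩
        have hRR : Point.some _ _ hQ + Point.some _ _ hQ = Point.some _ _ hQ := by rw [h2R, hsome]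
        exact some_ne_zero hQ (add_eq_left.mp hRR)
      · exact add_of_Y_eq hUx (by rw [EnegY]; linear_combination h')

set_option maxHeartbeats 1000000 in
open Classical in
theorem six_torsion_not_two_torsion_iff (a b : K) (hab : b ^ 2 = a ^ 3 - 1)
    (h : E.Nonsingular a b) :
    (6 • WeierstrassCurve.Affine.Point.some _ _ h = 0 ∧
        2 • WeierstrassCurve.Affine.Point.some _ _ h ≠ 0) ↔
      (a ^ 25 = a ∧ b ^ 25 = b ∧ b ≠ 0) := by
  by_cases hb : b = 0
  · subst hb
    have h2P0 : 2 • WeierstrassCurve.Affine.Point.some _ _ h = 0 := by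
      rw [two_nsmul]
      exact add_self_of_Y_eq (by rw [EnegY]; simp)
    exact iff_of_false (fun hc => hc.2 h2P0) (fun hc => hc.2.2 rfl)
  · have h2b : 2*b ≠ 0 := mul_ne_zero two_ne_K hb
    have hy : b ≠ E.negY a b := by
      rw [EnegY]; intro hc; exact hb (by linear_combination 3*hc - b*h5K)
    have hbb : b - -b ≠ 0 := by
      intro hc; exact hb (by linear_combination 3*hc - b*h5K)
    have hns := nonsingular_add h h (fun hxy => hy hxy.right)
    have h2P : 2 • WeierstrassCurve.Affine.Point.some _ _ h = Point.some _ _ hns := by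
      rw [two_nsmul]; exact add_self_of_Y_ne hy
    have h2Pne : 2 • WeierstrassCurve.Affine.Point.some _ _ h ≠ 0 := by
      rw [h2P]; exact some_ne_zero _
    have h6P : 6 • WeierstrassCurve.Affine.Point.some _ _ h = 3 • Point.some _ _ hns := by
      rw [show (6:ℕ) = 3*2 from rfl, mul_smul, h2P]
    have hl : E.slope a a b b * (2*b) = 3*a^2 := by
      rw [slope_of_Y_ne rfl hy, EnegY, show E.a₂ = 0 from rfl, show E.a₄ = 0 from rfl,
        show E.a₁ = 0 from rfl, div_mul_eq_mul_div, div_eq_iff hbb]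
      ring
    have hx₂ : E.addX a a (E.slope a a b b) * (2*b)^2 = 9*a^4 - 8*a*b^2 := by
      rw [EaddX]
      linear_combination ((E.slope a a b b)*(2*b) + 3*a^2) * hl
    obtain ⟨x₂, hx2eq⟩ : ∃ x₂, E.addX a a (E.slope a a b b) = x₂ := ⟨_, rfl⟩
    rw [hx2eq] at hx₂
    have key : (x₂^4 + x₂) * ((2*b)^2)^4
        = a^16 + a^13 + 4*a^10 + 4*a^7 + 3*a^4 + 3*a := by
      linear_combination
        ((x₂*(2*b)^2)^3
          + (x₂*(2*b)^2)^2*(9*a^4-8*a*b^2)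
          + (x₂*(2*b)^2)*(9*a^4-8*a*b^2)^2
          + (9*a^4-8*a*b^2)^3 + ((2*b)^2)^3) * hx₂
        + (((-6560)*a^13 + (-6464)*a^10 + (-5760)*a^7 + (-5056)*a^4 + (512)*a)
          + ((16768)*a^10 + (10304)*a^7 + (4544)*a^4 + (-512)*a)*b^2
          + ((-14336)*a^7 + (-4032)*a^4 + (512)*a)*b^4
          + ((4096)*a^4 + (-512)*a)*b^6) * hab
        + ((19)*a^13 + (140)*a^10 + (140)*a^7 + (1113)*a^4 + (-103)*a) * h5K
    have key6 : 6 • WeierstrassCurve.Affine.Point.some _ _ h = 0 ↔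
        (a^16 + a^13 + 4*a^10 + 4*a^7 + 3*a^4 + 3*a) = 0 := by
      rw [h6P, three_smul_iff _ _ hns, hx2eq]
      constructor
      · intro h0; rw [← key, h0, zero_mul]
      · intro h0
        have hz := key
        rw [h0] at hz
        rcases mul_eq_zero.mp hz with h' | h'
        · exact h'
        · exact absurd h' (pow_ne_zero 4 (pow_ne_zero 2 h2b))
    constructor
    · rintro ⟨h60, -⟩
      have hf := key6.mp h60
      refine ⟨?_, ?_, hb⟩
      · linear_combination (a^9 + 4*a^6 + 2*a^3 + 3) * hf
          + ((-1)*a^22 + (-2)*a^19 + (-5)*a^16 + (-6)*a^13 + (-7)*a^10 + (-6)*a^7 + (-3)*a^4 + (-2)*a) * h5K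
      · have hb24 : b^24 = (a^3-1)^12 := by rw [← hab]; ring
        have hone : (a^3-1)^12 = 1 := by
          linear_combination (a^20 + 2*a^17 + 3*a^11 + a^8 + a^5 + a^2) * hf
            + ((-3)*a^33 + (12)*a^30 + (-47)*a^27 + (96)*a^24 + (-163)*a^21 + (180)*a^18
              + (-162)*a^15 + (95)*a^12 + (-46)*a^9 + (12)*a^6 + (-3)*a^3) * h5K
        calc b^25 = b * b^24 := by ring
          _ = b * (a^3-1)^12 := by rw [hb24]
          _ = b := by rw [hone, mul_one]
    · rintro ⟨hA, hB, -⟩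
      refine ⟨?_, h2Pne⟩
      have hb24 : b^24 = 1 := by
        have hmul : b * b^24 = b * 1 := by rw [mul_one]; linear_combination hB
        exact mul_left_cancel₀ hb hmul
      have hH : (a^3-1)^12 = 1 := by rw [← hab]; linear_combination hb24
      rw [key6]
      linear_combination (4*a^18 + 4*a^15 + 2*a^9 + 2*a^3 + 2) * hA + (a^7 + 3*a^4) * hH
        + ((-1)*a^43 + (1)*a^40 + (-6)*a^37 + (4)*a^34 + (33)*a^31 + (-139)*a^28 + (290)*a^25
          + (-396)*a^22 + (377)*a^19 + (-252)*a^16 + (119)*a^13 + (-36)*a^10 + (8)*a^7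
          + (1)*a^4 + (1)*a) * h5K
end
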